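/- Any occurrence of the word w_n l_{n+1} in ξ is immediately followed by w_n l_n and immediately preceded by w_n l_n. -/

import Mathlib

inductive A : Type
  | a | b | c | d
deriving DecidableEq

def subst : A → List A
  | A.a => [A.a, A.c, A.a]
  | A.b => [A.d]
  | A.c => [A.b]
  | A.d => [A.c]

def substW (u : List A) : List A := u.flatMap subst

def wrd (n : ℕ) : List A := substW^[n - 1] [A.a]

def ltr (n : ℕ) : List A := substW^[n - 1] [A.c]

def seg (ξ : ℕ → A) (s m : ℕ) : List A := (List.range m).map fun i => ξ (s + 1 + i)

def IsFixed (ξ : ℕ → A) : Prop :=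
  ∀ N : ℕ, seg ξ 0 ((substW (seg ξ 0 N)).length) = substW (seg ξ 0 N)

/-! ### Auxiliary definitions -/

def nu (m : ℕ) : ℕ := m.factorization 2

def lA (m : ℕ) : A := if m % 3 = 1 then A.c else if m % 3 = 2 then A.b else A.d

noncomputable def f (p : ℕ) : A := if p % 2 = 0 then A.a else lA (nu (p + 1))

def W (n : ℕ) : List A := substW^[n] [A.a]

lemma substW_append (u v : List A) : substW (u ++ v) = substW u ++ substW v :=
  List.flatMap_append

lemma substW_iter_append (n : ℕ) (u v : List A) :
    substW^[n] (u ++ v) = substW^[n] u ++ substW^[n] v := by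
  induction n generalizing u v with
  | zero => simp
  | succ k ih => rw [Function.iterate_succ_apply, Function.iterate_succ_apply,
      Function.iterate_succ_apply, substW_append, ih]

lemma lA_eq_iff (m m' : ℕ) : lA m = lA m' ↔ m % 3 = m' % 3 := by
  have h1 : m % 3 = 0 ∨ m % 3 = 1 ∨ m % 3 = 2 := by omega
  have h2 : m' % 3 = 0 ∨ m' % 3 = 1 ∨ m' % 3 = 2 := by omega
  unfold lA
  rcases h1 with h1 | h1 | h1 <;> rcases h2 with h2 | h2 | h2 <;>
    simp [h1, h2]

lemma lA_ne_a (m : ℕ) : lA m ≠ A.a := by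
  unfold lA; split <;> [skip; split] <;> simp

lemma subst_lA (m : ℕ) : subst (lA m) = [lA (m + 1)] := by
  have h1 : m % 3 = 0 ∨ m % 3 = 1 ∨ m % 3 = 2 := by omega
  unfold lA
  rcases h1 with h1 | h1 | h1 <;>
    · have h2 : (m+1) % 3 = (m % 3 + 1) % 3 := by omega
      simp [h1, h2, subst]

lemma ltr_eq (m : ℕ) : substW^[m] [A.c] = [lA (m + 1)] := by
  induction m with
  | zero => simp [lA]
  | succ k ih =>
      rw [Function.iterate_succ_apply', ih]
      have : substW [lA (k+1)] = subst (lA (k+1)) := by simp [substW]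
      rw [this, subst_lA]

lemma W_succ (n : ℕ) : W (n + 1) = W n ++ [lA (n + 1)] ++ W n := by
  have h : W (n + 1) = substW^[n] (substW [A.a]) := by
    simp [W, Function.iterate_succ_apply]
  have h2 : substW [A.a] = [A.a] ++ [A.c] ++ [A.a] := by simp [substW, subst]
  rw [h, h2, substW_iter_append, substW_iter_append, ltr_eq]
  rfl

lemma W_length (n : ℕ) : (W n).length = 2 ^ (n + 1) - 1 := by
  induction n with
  | zero => simp [W]
  | succ k ih =>
      rw [W_succ]
      simp [ih]
      have : 1 ≤ 2 ^ (k+1) := Nat.one_le_two_pow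
      have : 2 ^ (k+1+1) = 2 * 2 ^ (k+1) := by ring
      omega

lemma nu_mul_odd (j u : ℕ) (hu : u % 2 = 1) : nu (2 ^ j * u) = j := by
  have hu0 : u ≠ 0 := by omega
  have h2 : ¬ (2 ∣ u) := by omega
  unfold nu
  rw [Nat.factorization_mul (by positivity) hu0]
  simp [Nat.Prime.factorization_pow Nat.prime_two,
    Nat.factorization_eq_zero_of_not_dvd h2]

lemma nu_odd (u : ℕ) (hu : u % 2 = 1) : nu u = 0 := by
  have := nu_mul_odd 0 u hu
  simpa using this

lemma odd_decomp (r : ℕ) (h : r ≠ 0) :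
    ∃ u, u % 2 = 1 ∧ r = 2 ^ nu r * u := by
  refine ⟨r / 2 ^ nu r, ?_, ?_⟩
  · have := Nat.not_dvd_ordCompl Nat.prime_two h
    unfold nu; omega
  · exact (Nat.ordProj_mul_ordCompl_eq_self r 2).symm

lemma two_pow_nu_le (r : ℕ) (h : r ≠ 0) : 2 ^ nu r ≤ r := Nat.ordProj_le 2 h

lemma even_pow_mul (n t : ℕ) (hn : 1 ≤ n) : (2 ^ n * t) % 2 = 0 := by
  have h : (2:ℕ) ∣ 2 ^ n * t :=
    dvd_mul_of_dvd_left (dvd_pow_self 2 (by omega)) t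
  omega

lemma f_even (p : ℕ) (h : p % 2 = 0) : f p = A.a := by simp [f, h]

lemma f_odd (p : ℕ) (h : p % 2 = 1) : f p = lA (nu (p + 1)) := by simp [f, h]

lemma f_eq_a_iff (p : ℕ) : f p = A.a ↔ p % 2 = 0 := by
  constructor
  · intro h
    by_contra hc
    have h1 : p % 2 = 1 := by omega
    rw [f_odd p h1] at h
    exact lA_ne_a _ h
  · exact f_even p

lemma nu_pow_mul (n t : ℕ) (ht : t ≠ 0) : nu (2 ^ n * t) = n + nu t := by
  rcases Nat.even_or_odd t with he' | ho'
  · obtain ⟨u, hu, hd⟩ := odd_decomp t ht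
    conv_lhs => rw [hd]
    rw [← mul_assoc, ← pow_add, nu_mul_odd _ _ hu]
  · have ho : t % 2 = 1 := Nat.odd_iff.mp ho'
    have h1 := nu_mul_odd n t ho
    have h2 := nu_odd t ho
    omega

lemma f_sep (n t : ℕ) (hn : 1 ≤ n) (ht : t ≠ 0) :
    f (2 ^ n * t - 1) = lA (n + nu t) := by
  have hpos : 0 < 2 ^ n * t := Nat.mul_pos (Nat.two_pow_pos n) (Nat.pos_of_ne_zero ht)
  have h2 := even_pow_mul n t hn
  have hodd : (2 ^ n * t - 1) % 2 = 1 := by omega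
  rw [f_odd _ hodd]
  have he : 2 ^ n * t - 1 + 1 = 2 ^ n * t := by omega
  rw [he, nu_pow_mul n t ht]

lemma f_periodic (n t p : ℕ) (hp : p < 2 ^ n - 1) : f (2 ^ n * t + p) = f p := by
  have hn : 1 ≤ n := by
    by_contra hc
    have : n = 0 := by omega
    subst this
    simp at hp
  have h2 := even_pow_mul n t hn
  rcases Nat.even_or_odd p with hep | hop
  · have hp2 : p % 2 = 0 := Nat.even_iff.mp hep
    rw [f_even _ (by omega), f_even _ hp2]
  · have hp2 : p % 2 = 1 := Nat.odd_iff.mp hop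
    rw [f_odd _ (by omega), f_odd _ hp2]
    congr 1
    obtain ⟨u, hu, hd⟩ := odd_decomp (p+1) (by omega)
    set i := nu (p+1) with hi
    have hle : 2 ^ i ≤ p + 1 := two_pow_nu_le _ (by omega)
    have hiltn : i < n := by
      by_contra hc
      have h3 : 2 ^ n ≤ 2 ^ i := Nat.pow_le_pow_right (by norm_num) (by omega)
      omega
    have h4 := even_pow_mul (n - i) t (by omega)
    have key : 2 ^ n * t + p + 1 = 2 ^ i * (2 ^ (n - i) * t + u) := by
      rw [Nat.mul_add, ← mul_assoc, ← pow_add]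
      have hni : i + (n - i) = n := by omega
      rw [hni]
      omega
    rw [key, nu_mul_odd _ _ (by omega)]

lemma f_get (n : ℕ) : ∀ p, ∀ h : p < (W n).length, (W n)[p] = f p := by
  induction n with
  | zero =>
      intro p h
      simp [W] at h
      have : p = 0 := by omega
      subst this
      simp [W, f, lA]
  | succ k ih =>
      intro p h
      have hL := W_length k
      have hL1 : 1 ≤ 2 ^ (k+1) := Nat.one_le_two_pow
      have hlen : ((W k ++ [lA (k+1)]).length) = 2 ^ (k+1) := by
        simp [hL]; omega
      have hL2 : (W (k+1)).length = 2 ^ (k+1+1) - 1 := W_length (k+1)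
      have hdouble : 2 ^ (k+1+1) = 2 * 2 ^ (k+1) := by ring
      rw [List.getElem_of_eq (W_succ k) h]
      rcases lt_trichotomy p (2 ^ (k+1) - 1) with hp | hp | hp
      · rw [List.getElem_append_left (by omega),
          List.getElem_append_left (by omega)]
        exact ih p (by omega)
      · subst hp
        rw [List.getElem_append_left (by omega),
          List.getElem_append_right (by omega)]
        have hf : f (2 ^ (k+1) - 1) = lA (k + 1 + nu 1) := by
          have := f_sep (k+1) 1 (by omega) one_ne_zero
          simpa using this
        have hnu1 : nu 1 = 0 := nu_odd 1 rfl
        rw [hf, hnu1]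
        simp [hL]
      · have hge : (W k ++ [lA (k+1)]).length ≤ p := by omega
        rw [List.getElem_append_right hge]
        have hq : p - 2 ^ (k+1) < 2 ^ (k+1) - 1 := by omega
        rw [ih _ (by omega)]
        have h5 : p - (W k ++ [lA (k+1)]).length = p - 2 ^ (k+1) := by omega
        rw [h5]
        have : p = 2 ^ (k+1) * 1 + (p - 2 ^ (k+1)) := by omega
        conv_rhs => rw [this]
        rw [f_periodic _ _ _ hq]

/-! ### The fixed point equals f -/

lemma seg_length (ξ : ℕ → A) (s m : ℕ) : (seg ξ s m).length = m := by simp [seg]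

lemma seg_get (ξ : ℕ → A) (s m p : ℕ) (h : p < (seg ξ s m).length) :
    (seg ξ s m)[p] = ξ (s + 1 + p) := by
  simp [seg]

lemma xi_one (ξ : ℕ → A) (hξ : IsFixed ξ) : seg ξ 0 1 = [A.a] := by
  have hseg1 : seg ξ 0 1 = [ξ 1] := by simp [seg, List.range_succ]
  have h := hξ 1
  rw [hseg1] at h
  cases hA : ξ 1 with
  | a => rw [hseg1, hA]
  | b => rw [hA] at h; simp [substW, subst] at h; rw [hseg1, hA] at h; simp at h
  | c => rw [hA] at h; simp [substW, subst] at h; rw [hseg1, hA] at h; simp at h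
  | d => rw [hA] at h; simp [substW, subst] at h; rw [hseg1, hA] at h; simp at h

lemma prefix_W (ξ : ℕ → A) (hξ : IsFixed ξ) (n : ℕ) :
    seg ξ 0 ((W n).length) = W n := by
  induction n with
  | zero =>
      have : (W 0).length = 1 := by simp [W]
      rw [this]
      have : W 0 = [A.a] := by simp [W]
      rw [this]
      exact xi_one ξ hξ
  | succ k ih =>
      have h := hξ ((W k).length)
      rw [ih] at h
      have hW : substW (W k) = W (k+1) := by
        rw [W, W]
        exact (Function.iterate_succ_apply' substW k [A.a]).symm
      rw [hW] at h
      exact h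

lemma xi_eq_f (ξ : ℕ → A) (hξ : IsFixed ξ) (p : ℕ) : ξ (p + 1) = f p := by
  have hlt : p < (W p).length := by
    rw [W_length]
    have : p + 1 < 2 ^ (p+1) := Nat.lt_two_pow_self
    omega
  have h := prefix_W ξ hξ p
  have h2 := List.getElem_of_eq h (by rw [seg_length]; exact hlt)
  rw [seg_get] at h2
  have h3 : (0:ℕ) + 1 + p = p + 1 := by omega
  rw [h3] at h2
  rw [h2]
  exact f_get p p hlt

/-! ### Alignment -/

lemma align (n s : ℕ) (hn : 1 ≤ n)
    (h1 : ∀ p, p < 2 ^ n - 1 → f (s + p) = f p)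
    (h2 : f (s + (2 ^ n - 1)) = lA (n + 1)) :
    ∃ k, k % 2 = 1 ∧ s = 2 ^ n * k := by
  have hpow : 2 ≤ 2 ^ n := by
    calc 2 = 2 ^ 1 := rfl
    _ ≤ 2 ^ n := Nat.pow_le_pow_right (by norm_num) hn
  -- s is even
  have hs_even : s % 2 = 0 := by
    have := h1 0 (by omega)
    simp at this
    have hf0 : f 0 = A.a := by simp [f]
    rw [hf0] at this
    exact (f_eq_a_iff s).mp this
  -- s ≠ 0
  have hs_ne : s ≠ 0 := by
    intro h0
    subst h0
    simp at h2
    have : f (2 ^ n - 1) = lA (n + nu 1) := by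
      have := f_sep n 1 hn one_ne_zero; simpa using this
    rw [nu_odd 1 rfl] at this
    rw [this, lA_eq_iff] at h2
    omega
  obtain ⟨u, hu, hd⟩ := odd_decomp s hs_ne
  set j := nu s with hj
  have hj1 : 1 ≤ j := by
    by_contra hc
    have : j = 0 := by omega
    rw [this] at hd
    simp at hd
    omega
  have hu0 : u ≠ 0 := by omega
  -- key claim: n ≤ j
  have hnj : n ≤ j := by
    by_contra hc
    push_neg at hc
    -- j < n; use position 2^j - 1
    have hjle : 2 ^ j ≤ 2 ^ (n-1) := Nat.pow_le_pow_right (by norm_num) (by omega)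
    have hn1 : 2 ^ (n-1) * 2 = 2 ^ n := by
      rw [← pow_succ]; congr 1; omega
    have hp1 : 2 ^ j - 1 < 2 ^ n - 1 := by
      have : 2 ^ j < 2 ^ n := Nat.pow_lt_pow_right (by norm_num) hc
      have := Nat.two_pow_pos j
      omega
    have e1 := h1 (2 ^ j - 1) hp1
    have hps : s + (2 ^ j - 1) = 2 ^ j * (u + 1) - 1 := by
      have := Nat.two_pow_pos j
      rw [Nat.mul_add, ← hd]
      omega
    rw [hps, f_sep j (u+1) hj1 (by omega)] at e1
    have hfj : f (2 ^ j - 1) = lA j := by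
      have := f_sep j 1 hj1 one_ne_zero
      rw [nu_odd 1 rfl] at this
      simpa using this
    rw [hfj, lA_eq_iff] at e1
    -- nu (u+1) ≡ 0 mod 3 and ≥ 1 so ≥ 3 hence 8 ∣ u+1
    have hnu1 : nu (u+1) % 3 = 0 := by omega
    have hnu1' : 1 ≤ nu (u+1) := by
      by_contra hc'
      have h0 : nu (u+1) = 0 := by omega
      obtain ⟨v, hv, hdv⟩ := odd_decomp (u+1) (by omega)
      rw [h0] at hdv
      simp at hdv
      omega
    have h8 : (8:ℕ) ∣ u + 1 := by
      have h3 : 3 ≤ nu (u+1) := by omega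
      have : (2:ℕ) ^ 3 ∣ 2 ^ nu (u+1) := Nat.pow_dvd_pow 2 h3
      obtain ⟨v, hv, hdv⟩ := odd_decomp (u+1) (by omega)
      exact dvd_trans (by norm_num at this ⊢; exact this) ⟨v, hdv⟩
    rcases Nat.lt_or_ge j (n-1) with hjn | hjn
    · -- j ≤ n - 2 : use position 3 * 2^j - 1
      have hp2 : 3 * 2 ^ j - 1 < 2 ^ n - 1 := by
        have h4 : 2 ^ j * 4 = 2 ^ (j + 2) := by rw [pow_add]; norm_num
        have : 2 ^ (j+2) ≤ 2 ^ n := Nat.pow_le_pow_right (by norm_num) (by omega)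
        have := Nat.two_pow_pos j
        omega
      have e2 := h1 (3 * 2 ^ j - 1) hp2
      have hps2 : s + (3 * 2 ^ j - 1) = 2 ^ j * (u + 3) - 1 := by
        have := Nat.two_pow_pos j
        rw [Nat.mul_add, ← hd]
        omega
      rw [hps2, f_sep j (u+3) hj1 (by omega)] at e2
      have hfj2 : f (3 * 2 ^ j - 1) = lA j := by
        have := f_sep j 3 hj1 (by norm_num)
        rw [nu_odd 3 rfl] at this
        rw [mul_comm] at this
        simpa using this
      rw [hfj2, lA_eq_iff] at e2
      have hnu3 : nu (u+3) % 3 = 0 := by omega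
      have hnu3' : 1 ≤ nu (u+3) := by
        by_contra hc'
        have h0 : nu (u+3) = 0 := by omega
        obtain ⟨v, hv, hdv⟩ := odd_decomp (u+3) (by omega)
        rw [h0] at hdv
        simp at hdv
        omega
      have h8' : (8:ℕ) ∣ u + 3 := by
        have h3 : 3 ≤ nu (u+3) := by omega
        have : (2:ℕ) ^ 3 ∣ 2 ^ nu (u+3) := Nat.pow_dvd_pow 2 h3
        obtain ⟨v, hv, hdv⟩ := odd_decomp (u+3) (by omega)
        exact dvd_trans (by norm_num at this ⊢; exact this) ⟨v, hdv⟩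
      omega
    · -- j = n - 1 : use h2
      have hjeq : j = n - 1 := by omega
      have hps3 : s + (2 ^ n - 1) = 2 ^ j * (u + 2) - 1 := by
        rw [Nat.mul_add, ← hd]
        have : 2 ^ j * 2 = 2 ^ n := by
          rw [hjeq, ← pow_succ]; congr 1; omega
        omega
      rw [hps3, f_sep j (u+2) hj1 (by omega), nu_odd (u+2) (by omega),
        lA_eq_iff] at h2
      omega
  -- now 2^n ∣ s
  refine ⟨2 ^ (j - n) * u, ?_, ?_⟩
  · -- oddness of k := 2^(j-n) * u
    have hs : s = 2 ^ n * (2 ^ (j - n) * u) := by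
      rw [hd, ← mul_assoc, ← pow_add]
      congr 2
      omega
    set k := 2 ^ (j - n) * u with hk
    have hps : s + (2 ^ n - 1) = 2 ^ n * (k + 1) - 1 := by
      rw [hs, Nat.mul_add]
      have := Nat.two_pow_pos n
      omega
    rw [hps, f_sep n (k+1) hn (by omega), lA_eq_iff] at h2
    by_contra hc
    have hkodd : (k + 1) % 2 = 1 := by omega
    rw [nu_odd (k+1) hkodd] at h2
    omega
  · rw [hd, ← mul_assoc, ← pow_add]
    congr 2
    omega

lemma getElem_singleton' (x : A) (i : ℕ) (h : i < ([x] : List A).length) : ([x] : List A)[i] = x := by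
  have : i = 0 := by simp at h; omega
  subst this
  rfl

theorem stmt10 (ξ : ℕ → A) (hξ : IsFixed ξ) :
    ∀ n : ℕ, 1 ≤ n → ∀ s : ℕ, seg ξ s (2 ^ n) = wrd n ++ ltr (n + 1) →
      seg ξ (s + 2 ^ n) (2 ^ n) = wrd n ++ ltr n ∧
      2 ^ n ≤ s ∧ seg ξ (s - 2 ^ n) (2 ^ n) = wrd n ++ ltr n := by
  intro n hn s hseg
  obtain ⟨m, rfl⟩ : ∃ m, n = m + 1 := ⟨n - 1, by omega⟩
  have hPpos : 0 < 2 ^ (m+1) := Nat.two_pow_pos _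
  have hP2 : 2 ≤ 2 ^ (m+1) := by
    calc 2 = 2 ^ 1 := rfl
    _ ≤ 2 ^ (m+1) := Nat.pow_le_pow_right (by norm_num) (by omega)
  have hwrd : wrd (m+1) = W m := by simp [wrd, W]
  have hltr2 : ltr (m+1+1) = [lA (m+2)] := by
    have h := ltr_eq (m+1)
    simpa [ltr] using h
  have hltr1 : ltr (m+1) = [lA (m+1)] := by
    have h := ltr_eq m
    simpa [ltr] using h
  have hLW : (W m).length = 2 ^ (m+1) - 1 := W_length m
  rw [hwrd, hltr2] at hseg
  have hlen2 : (W m ++ [lA (m+2)]).length = 2 ^ (m+1) := by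
    simp [hLW]; omega
  have h_at : ∀ p, ∀ hp : p < (W m ++ [lA (m+2)]).length,
      f (s + p) = (W m ++ [lA (m+2)])[p] := by
    intro p hp
    have hlen : p < (seg ξ s (2 ^ (m+1))).length := by rw [seg_length]; omega
    have h := List.getElem_of_eq hseg hlen
    rw [seg_get] at h
    have e : s + 1 + p = (s + p) + 1 := by omega
    rw [e, xi_eq_f ξ hξ] at h
    exact h
  have h1 : ∀ p, p < 2 ^ (m+1) - 1 → f (s + p) = f p := by
    intro p hp
    have h := h_at p (by omega)
    rw [List.getElem_append_left (by omega)] at h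
    rw [h]
    exact f_get m p (by omega)
  have h2 : f (s + (2 ^ (m+1) - 1)) = lA (m + 1 + 1) := by
    have h := h_at (2 ^ (m+1) - 1) (by omega)
    rw [List.getElem_append_right (by omega)] at h
    rw [getElem_singleton'] at h
    exact h
  obtain ⟨k, hkodd, hs⟩ := align (m+1) s (by omega) h1 h2
  obtain ⟨k', rfl⟩ : ∃ k', k = k' + 1 := ⟨k - 1, by omega⟩
  have hs1 : s = 2 ^ (m+1) * k' + 2 ^ (m+1) := by rw [hs]; ring
  have hk'even : k' % 2 = 0 := by omega
  rw [hwrd, hltr1]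
  have hRlen : (W m ++ [lA (m+1)]).length = 2 ^ (m+1) := by
    simp [hLW]; omega
  refine ⟨?_, by omega, ?_⟩
  · -- following block
    apply List.ext_getElem (by rw [seg_length, hRlen])
    intro p hp1 hp2
    rw [seg_length] at hp1
    rw [seg_get]
    have e : s + 2 ^ (m+1) + 1 + p = (s + 2 ^ (m+1) + p) + 1 := by omega
    rw [e, xi_eq_f ξ hξ]
    rcases lt_or_ge p (2 ^ (m+1) - 1) with hc | hc
    · rw [List.getElem_append_left (by omega), f_get m p (by omega)]
      have e2 : s + 2 ^ (m+1) + p = 2 ^ (m+1) * (k' + 2) + p := by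
        rw [hs1]; ring
      rw [e2]
      exact f_periodic (m+1) (k'+2) p hc
    · rw [List.getElem_append_right (by omega), getElem_singleton']
      have hx : 2 ^ (m+1) * (k' + 3) = s + 2 ^ (m+1) + 2 ^ (m+1) := by
        rw [hs1]; ring
      have e2 : s + 2 ^ (m+1) + p = 2 ^ (m+1) * (k' + 3) - 1 := by omega
      rw [e2, f_sep (m+1) (k'+3) (by omega) (by omega), nu_odd (k'+3) (by omega)]
  · -- preceding block
    apply List.ext_getElem (by rw [seg_length, hRlen])
    intro p hp1 hp2
    rw [seg_length] at hp1
    rw [seg_get]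
    have e : s - 2 ^ (m+1) + 1 + p = (s - 2 ^ (m+1) + p) + 1 := by omega
    rw [e, xi_eq_f ξ hξ]
    rcases lt_or_ge p (2 ^ (m+1) - 1) with hc | hc
    · rw [List.getElem_append_left (by omega), f_get m p (by omega)]
      have e2 : s - 2 ^ (m+1) + p = 2 ^ (m+1) * k' + p := by omega
      rw [e2]
      exact f_periodic (m+1) k' p hc
    · rw [List.getElem_append_right (by omega), getElem_singleton']
      have e2 : s - 2 ^ (m+1) + p = 2 ^ (m+1) * (k' + 1) - 1 := by omega
      rw [e2, f_sep (m+1) (k'+1) (by omega) (by omega), nu_odd (k'+1) (by omega)]
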